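/- The elements z₀ = 2(ψ₁*ψ₁+ψ₂*ψ₂)−1, z₁ = 2(μψ₃*ψ₁+ψ₂*ψ₄), z₂ = 2(−ψ₁*ψ₄+μ̄ψ₃*ψ₂) in A(S⁷_{θ'}) satisfy the sphere relation z₁*z₁ + z₂*z₂ + z₀² = 1, the commutation relations z₁z₂ = λ z₂z₁ and z₁z₂* = λ̄ z₂*z₁ with λ = e^{2πiθ} = μ², and z₀ is central among z₀, z₁, z₂, z₁*, z₂*. -/
import Mathlib

private lemma swap_ext {A : Type*} [Ring A] [Algebra ℂ A] {p q : A} {c : ℂ}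
    (h : p * q = c • (q * p)) (x : A) : p * (q * x) = c • (q * (p * x)) := by
  rw [← mul_assoc, h, smul_mul_assoc, mul_assoc]

private lemma swap_ext1 {A : Type*} [Ring A] {p q : A}
    (h : p * q = q * p) (x : A) : p * (q * x) = q * (p * x) := by
  rw [← mul_assoc, h, mul_assoc]

set_option maxHeartbeats 4000000 in
/-- The elements `z₀ = 2(ψ₁*ψ₁+ψ₂*ψ₂)−1`, `z₁ = 2(μψ₃*ψ₁+ψ₂*ψ₄)`,
`z₂ = 2(−ψ₁*ψ₄+μ̄ψ₃*ψ₂)` of `A(S⁷_{θ'})` satisfy the sphere relation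
`z₁*z₁ + z₂*z₂ + z₀² = 1`, the commutation relations `z₁z₂ = λ z₂z₁` and
`z₁z₂* = λ̄ z₂*z₁` with `λ = e^{2πiθ} = μ²`, and `z₀` is central among
`z₀, z₁, z₂, z₁*, z₂*`. -/
theorem stmt_4 (θ : ℝ) (A : Type*) [Ring A] [Algebra ℂ A] [StarRing A]
    [StarModule ℂ A]
    (μ : ℂ) (hμ : μ = Complex.exp (Real.pi * Complex.I * θ))
    (lam : ℂ) (hlam : lam = μ ^ 2)
    (lam' : Matrix (Fin 4) (Fin 4) ℂ)
    (hlam' : lam' = !![1, 1, star μ, μ;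
                       1, 1, μ, star μ;
                       μ, star μ, 1, 1;
                       star μ, μ, 1, 1])
    (ψ : Fin 4 → A)
    (hrel1 : ∀ a b, ψ a * ψ b = lam' a b • (ψ b * ψ a))
    (hrel2 : ∀ a b, ψ a * star (ψ b) = lam' b a • (star (ψ b) * ψ a))
    (hrel3 : ∀ a b, star (ψ a) * star (ψ b) = lam' a b • (star (ψ b) * star (ψ a)))
    (hsph : ∑ a, star (ψ a) * ψ a = 1)
    (z₀ z₁ z₂ : A)
    (hz₀ : z₀ = (2 : ℂ) • (star (ψ 0) * ψ 0 + star (ψ 1) * ψ 1) - 1)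
    (hz₁ : z₁ = (2 : ℂ) • (μ • (star (ψ 2) * ψ 0) + star (ψ 1) * ψ 3))
    (hz₂ : z₂ = (2 : ℂ) • (-(star (ψ 0) * ψ 3) + star μ • (star (ψ 2) * ψ 1))) :
    star z₁ * z₁ + star z₂ * z₂ + z₀ ^ 2 = 1 ∧
    z₁ * z₂ = lam • (z₂ * z₁) ∧
    z₁ * star z₂ = star lam • (star z₂ * z₁) ∧
    z₀ * z₁ = z₁ * z₀ ∧ z₀ * z₂ = z₂ * z₀ ∧
    z₀ * star z₁ = star z₁ * z₀ ∧ z₀ * star z₂ = star z₂ * z₀ := by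
  have hμ0 : μ ≠ 0 := by rw [hμ]; exact Complex.exp_ne_zero _
  have hμ0 : μ ≠ 0 := by rw [hμ]; exact Complex.exp_ne_zero _
  have hstar : star μ = μ⁻¹ := by
    rw [hμ, ← Complex.exp_neg, Complex.star_def, ← Complex.exp_conj]
    congr 1
    simp [Complex.conj_ofReal]
  have l01 : lam' 0 1 = 1 := by simp [hlam']
  have l10 : lam' 1 0 = 1 := by simp [hlam']
  have l02 : lam' 0 2 = μ⁻¹ := by simp [hlam', hstar]
  have l20 : lam' 2 0 = μ := by simp [hlam']
  have l03 : lam' 0 3 = μ := by simp [hlam']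
  have l30 : lam' 3 0 = μ⁻¹ := by simp [hlam', hstar]
  have l12 : lam' 1 2 = μ := by simp [hlam']
  have l21 : lam' 2 1 = μ⁻¹ := by simp [hlam', hstar]
  have l13 : lam' 1 3 = μ⁻¹ := by simp [hlam', hstar]
  have l31 : lam' 3 1 = μ := by simp [hlam']
  have l23 : lam' 2 3 = 1 := by simp [hlam', Matrix.vecHead, Matrix.vecTail]
  have l32 : lam' 3 2 = 1 := by simp [hlam', Matrix.vecHead, Matrix.vecTail]
  have l00 : lam' 0 0 = 1 := by simp [hlam', Matrix.vecHead, Matrix.vecTail]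
  have l11 : lam' 1 1 = 1 := by simp [hlam', Matrix.vecHead, Matrix.vecTail]
  have l22 : lam' 2 2 = 1 := by simp [hlam', Matrix.vecHead, Matrix.vecTail]
  have l33 : lam' 3 3 = 1 := by simp [hlam', Matrix.vecHead, Matrix.vecTail]
  have s10 := hrel1 1 0; rw [l10, one_smul] at s10
  have s20 := hrel1 2 0; rw [l20] at s20
  have s21 := hrel1 2 1; rw [l21] at s21
  have s30 := hrel1 3 0; rw [l30] at s30
  have s31 := hrel1 3 1; rw [l31] at s31
  have s32 := hrel1 3 2; rw [l32, one_smul] at s32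
  have t10 := hrel3 1 0; rw [l10, one_smul] at t10
  have t20 := hrel3 2 0; rw [l20] at t20
  have t21 := hrel3 2 1; rw [l21] at t21
  have t30 := hrel3 3 0; rw [l30] at t30
  have t31 := hrel3 3 1; rw [l31] at t31
  have t32 := hrel3 3 2; rw [l32, one_smul] at t32
  have m00 := hrel2 0 0; rw [l00, one_smul] at m00
  have m01 := hrel2 0 1; rw [l10, one_smul] at m01
  have m02 := hrel2 0 2; rw [l20] at m02
  have m03 := hrel2 0 3; rw [l30] at m03
  have m10 := hrel2 1 0; rw [l01, one_smul] at m10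
  have m11 := hrel2 1 1; rw [l11, one_smul] at m11
  have m12 := hrel2 1 2; rw [l21] at m12
  have m13 := hrel2 1 3; rw [l31] at m13
  have m20 := hrel2 2 0; rw [l02] at m20
  have m21 := hrel2 2 1; rw [l12] at m21
  have m22 := hrel2 2 2; rw [l22, one_smul] at m22
  have m23 := hrel2 2 3; rw [l32, one_smul] at m23
  have m30 := hrel2 3 0; rw [l03] at m30
  have m31 := hrel2 3 1; rw [l13] at m31
  have m32 := hrel2 3 2; rw [l23, one_smul] at m32
  have m33 := hrel2 3 3; rw [l33, one_smul] at m33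
  have hT : star (ψ 2) * ψ 2 + star (ψ 3) * ψ 3
      = 1 - (star (ψ 0) * ψ 0 + star (ψ 1) * ψ 1) := by
    rw [Fin.sum_univ_four] at hsph
    rw [eq_sub_iff_add_eq, ← hsph]
    abel
  refine ⟨?_, ?_, ?_, ?_, ?_, ?_, ?_⟩
  · -- sphere relation
    have key : star z₁ * z₁ + star z₂ * z₂
        = (4 : ℂ) • ((star (ψ 0) * ψ 0 + star (ψ 1) * ψ 1) *
            (star (ψ 2) * ψ 2 + star (ψ 3) * ψ 3)) := by
      rw [hz₁, hz₂]
      simp only [star_add, star_sub, star_mul, star_smul, star_neg, star_one, star_star,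
        star_ofNat, hstar, star_inv₀]
      simp only [mul_add, add_mul, mul_sub, sub_mul, mul_neg, neg_mul, smul_add, smul_sub,
        smul_neg, smul_mul_assoc, mul_smul_comm, smul_smul, mul_assoc, one_mul, mul_one,
        s20, s21, s30, s31, t20, t21, t30, t31,
        m02, m03, m12, m13, m20, m21, m30, m31,
        s10, s32, t10, t32, m00, m01, m10, m11, m22, m23, m32, m33,
        swap_ext s20, swap_ext s21, swap_ext s30, swap_ext s31,
        swap_ext t20, swap_ext t21, swap_ext t30, swap_ext t31,
        swap_ext m02, swap_ext m03, swap_ext m12, swap_ext m13,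
        swap_ext m20, swap_ext m21, swap_ext m30, swap_ext m31,
        swap_ext1 s10, swap_ext1 s32, swap_ext1 t10, swap_ext1 t32,
        swap_ext1 m00, swap_ext1 m01, swap_ext1 m10, swap_ext1 m11,
        swap_ext1 m22, swap_ext1 m23, swap_ext1 m32, swap_ext1 m33]
      match_scalars <;> field_simp <;> try ring
    rw [key, hT, hz₀]
    simp only [mul_add, add_mul, mul_sub, mul_one, pow_two, sub_mul, one_mul, smul_sub, smul_add, smul_mul_assoc,
      mul_smul_comm, smul_smul]
    module
  all_goals (
    subst hz₀ hz₁ hz₂ hlam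
    simp only [star_add, star_sub, star_mul, star_smul, star_neg, star_one, star_star,
      star_ofNat, star_pow, hstar, star_inv₀, mul_add, add_mul, mul_sub, sub_mul, mul_neg, neg_mul, smul_add, smul_sub,
      smul_neg, smul_mul_assoc, mul_smul_comm, smul_smul, mul_assoc, one_mul, mul_one,
      s20, s21, s30, s31, t20, t21, t30, t31,
      m02, m03, m12, m13, m20, m21, m30, m31,
      s10, s32, t10, t32, m00, m01, m10, m11, m22, m23, m32, m33,
      swap_ext s20, swap_ext s21, swap_ext s30, swap_ext s31,
      swap_ext t20, swap_ext t21, swap_ext t30, swap_ext t31,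
      swap_ext m02, swap_ext m03, swap_ext m12, swap_ext m13,
      swap_ext m20, swap_ext m21, swap_ext m30, swap_ext m31,
      swap_ext1 s10, swap_ext1 s32, swap_ext1 t10, swap_ext1 t32,
      swap_ext1 m00, swap_ext1 m01, swap_ext1 m10, swap_ext1 m11,
      swap_ext1 m22, swap_ext1 m23, swap_ext1 m32, swap_ext1 m33]
    match_scalars <;> field_simp <;> try ring)
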